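/- Let h > 0 be real and θ ∈ ℝ. Over ℂ, let A be the 2×2 matrix (1/h²)·[[2, −1], [−1, 2]], let Φ = diag(1, e^{iθ}), let W = (1/2)·I₂, and let V be the 2×1 column vector of ones. Then A is invertible with A⁻¹ = (h²/3)·[[2, 1], [1, 2]], and the 1×1 matrix Vᵀ W Φ* A⁻¹ Φ V (where Φ* is the conjugate transpose of Φ) has its unique entry equal to (h²/6)(4 + 2cos θ) = (h²/6)(4 + e^{iθ} + e^{−iθ}). -/

import Mathlib

open Matrix Complex

noncomputable def A16 (h : ℝ) : Matrix (Fin 2) (Fin 2) ℂ :=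
  (1 / (h ^ 2 : ℂ)) • !![2, -1; -1, 2]

noncomputable def Phi16 (θ : ℝ) : Matrix (Fin 2) (Fin 2) ℂ :=
  diagonal ![1, exp (I * θ)]

noncomputable def W16 : Matrix (Fin 2) (Fin 2) ℂ := (1 / 2 : ℂ) • 1

def V16 : Matrix (Fin 2) (Fin 1) ℂ := fun _ _ => 1

theorem stmt_16 (h θ : ℝ) (hh : 0 < h) :
    IsUnit (A16 h) ∧
    (A16 h)⁻¹ = ((h ^ 2 : ℂ) / 3) • !![2, 1; 1, 2] ∧
    (V16ᵀ * W16 * (Phi16 θ)ᴴ * (A16 h)⁻¹ * Phi16 θ * V16) 0 0 =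
      ((h ^ 2 : ℂ) / 6) * (4 + 2 * (Real.cos θ : ℂ)) ∧
    (V16ᵀ * W16 * (Phi16 θ)ᴴ * (A16 h)⁻¹ * Phi16 θ * V16) 0 0 =
      ((h ^ 2 : ℂ) / 6) * (4 + exp (I * θ) + exp (-(I * θ))) := by
  have hh2 : (h ^ 2 : ℂ) ≠ 0 := by
    exact_mod_cast pow_ne_zero 2 (by exact_mod_cast hh.ne' : (h : ℂ) ≠ 0)
  have hmul : A16 h * (((h ^ 2 : ℂ) / 3) • !![2, 1; 1, 2]) = 1 := by
    simp only [A16, Matrix.smul_mul, Matrix.mul_smul, smul_smul]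
    rw [show ((h ^ 2 : ℂ) / 3) * (1 / (h ^ 2 : ℂ)) = 1 / 3 by field_simp; ring_nf; exact mul_inv_cancel₀ (by exact_mod_cast hh.ne')]
    ext i j
    fin_cases i <;> fin_cases j <;>
      simp [Matrix.mul_apply, Fin.sum_univ_two, Matrix.one_apply] <;> ring
  have hunit : IsUnit (A16 h) := (Matrix.isUnit_iff_isUnit_det _).2 (Matrix.isUnit_det_of_right_inverse hmul)
  have hinv : (A16 h)⁻¹ = ((h ^ 2 : ℂ) / 3) • !![2, 1; 1, 2] :=
    inv_eq_right_inv hmul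
  refine ⟨hunit, hinv, ?_, ?_⟩ <;>
  · rw [hinv]
    have he : Complex.exp (-(↑θ * I)) * Complex.exp (↑θ * I) = 1 := by
      rw [← Complex.exp_add]; simp
    simp [V16, W16, Phi16, Matrix.mul_apply, Fin.sum_univ_two, Matrix.one_apply,
      Matrix.diagonal, conjTranspose_apply, ← Complex.exp_conj, Complex.cos,
      mul_comm I (θ : ℂ)]
    linear_combination ((h : ℂ) ^ 2 / 3) * he
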